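/- arXiv:1102.1413 — 2 statements merged into one kernel-verified Lean document; each statement's English description precedes it below -/
import Mathlib

section
/- For every x ∈ ℝ the series ∑_{k∈ℤ} J_k(x) e^{ikθ} converges absolutely and uniformly in θ ∈ ℝ, and its sum equals e^{i x sin θ}; that is, e^{i x sin θ} = ∑_{k=−∞}^{∞} J_k(x) e^{ikθ} (the Jacobi–Anger expansion). -/
open MeasureTheory Real Filter

noncomputable section

/-- The Bessel function of the first kind of integer order `k`, defined by
`J_k(x) = (1/(2π)) ∫_{−π}^{π} exp(i(x sin τ − k τ)) dτ` (this integral is real-valued). -/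
def besselJ (k : ℤ) (x : ℝ) : ℂ :=
  (1 / (2 * π)) * ∫ τ in (-π)..π, Complex.exp (Complex.I * (x * Real.sin τ - k * τ))


def jf (x : ℝ) : ℝ → ℂ := fun t => Complex.exp (Complex.I * (x * Real.sin t))

lemma jf_periodic (x : ℝ) : Function.Periodic (jf x) (2 * π) := by
  intro t; simp [jf, Real.sin_add_two_pi]

lemma jf_cont (x : ℝ) : Continuous (jf x) := by
  unfold jf; fun_prop

lemma jf_lift_cont (x : ℝ) : Continuous ((jf_periodic x).lift) := by
  rw [isQuotientMap_quotient_mk'.continuous_iff]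
  exact jf_cont x

def jF (x : ℝ) : C(AddCircle (2 * π), ℂ) := ⟨(jf_periodic x).lift, jf_lift_cont x⟩

instance : Fact (0 < 2 * π) := ⟨by positivity⟩

lemma jF_coeff (x : ℝ) (k : ℤ) : fourierCoeff (⇑(jF x)) k = besselJ k x := by
  have h2 : -π + 2 * π = π := by ring
  rw [fourierCoeff_eq_intervalIntegral _ k (-π), h2, besselJ]
  rw [Complex.real_smul]
  congr 1
  · push_cast; ring
  · apply intervalIntegral.integral_congr
    intro t ht
    simp only []
    have h1 : (jF x) ((t : ℝ) : AddCircle (2 * π)) = jf x t := (jf_periodic x).lift_coe t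
    rw [smul_eq_mul, h1, fourier_coe_apply]
    show _ * Complex.exp _ = _
    rw [← Complex.exp_add]
    congr 1
    have hπ : (π:ℂ) ≠ 0 := by exact_mod_cast Real.pi_ne_zero
    push_cast
    field_simp
    ring

def jf1 (x : ℝ) : ℝ → ℂ := fun t => (Complex.I * x * Real.cos t) * jf x t
def jf2 (x : ℝ) : ℝ → ℂ :=
  fun t => (Complex.I * x * (-Real.sin t) + (Complex.I * x * Real.cos t)^2) * jf x t

lemma jf_hasDeriv (x : ℝ) (t : ℝ) : HasDerivAt (jf x) (jf1 x t) t := by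
  have h : HasDerivAt (fun t : ℝ => Complex.I * ((x : ℂ) * Real.sin t))
      (Complex.I * ((x : ℂ) * Real.cos t)) t := by
    have hs : HasDerivAt (fun t : ℝ => ((Real.sin t : ℂ))) ((Real.cos t : ℂ)) t :=
      (Real.hasDerivAt_sin t).ofReal_comp
    exact (hs.const_mul (x:ℂ)).const_mul Complex.I
  have h2 := h.cexp
  unfold jf jf1
  convert h2 using 1
  simp only [jf]
  ring

lemma jf1_hasDeriv (x : ℝ) (t : ℝ) : HasDerivAt (jf1 x) (jf2 x t) t := by
  have hc : HasDerivAt (fun t : ℝ => (Complex.I * x * Real.cos t))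
      (Complex.I * x * (-(Real.sin t : ℂ))) t := by
    have hs : HasDerivAt (fun t : ℝ => ((Real.cos t : ℂ))) (-(Real.sin t : ℂ)) t := by
      have := (Real.hasDerivAt_cos t).ofReal_comp
      simpa using this
    exact hs.const_mul (Complex.I * x)
  have h2 := hc.mul (jf_hasDeriv x t)
  unfold jf1 jf2
  convert h2 using 1
  · rfl
  · rfl
  unfold jf1
  push_cast
  ring

lemma jf_norm (x : ℝ) (t : ℝ) : ‖jf x t‖ = 1 := by
  simp [jf, Complex.norm_exp]

lemma jf2_norm_le (x : ℝ) (t : ℝ) : ‖jf2 x t‖ ≤ |x| + x^2 := by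
  rw [jf2, norm_mul, jf_norm, mul_one]
  refine le_trans (norm_add_le _ _) (add_le_add ?_ ?_)
  · rw [norm_mul, norm_mul, Complex.norm_I, one_mul, norm_neg, Complex.norm_real, Complex.norm_real,
      Real.norm_eq_abs, Real.norm_eq_abs]
    calc |x| * |Real.sin t| ≤ |x| * 1 :=
          mul_le_mul_of_nonneg_left (abs_sin_le_one t) (abs_nonneg x)
      _ = |x| := mul_one _
  · rw [norm_pow, norm_mul, norm_mul, Complex.norm_I, one_mul, Complex.norm_real,
      Complex.norm_real, Real.norm_eq_abs, Real.norm_eq_abs]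
    calc (|x| * |Real.cos t|)^2 ≤ (|x| * 1)^2 := by
          gcongr; exact abs_cos_le_one t
      _ = x^2 := by rw [mul_one, _root_.sq_abs]

lemma hpi : -π < π := neg_lt_self pi_pos

lemma fourier_norm_one {T : ℝ} (n : ℤ) (z : AddCircle T) : ‖fourier n z‖ = 1 := by
  rw [fourier_apply, Circle.norm_coe]

lemma besselJ_eq (x : ℝ) (k : ℤ) : besselJ k x = fourierCoeffOn hpi (jf x) k := by
  rw [fourierCoeffOn_eq_integral, besselJ, Complex.real_smul]
  have hπ : (π:ℂ) ≠ 0 := Complex.ofReal_ne_zero.mpr Real.pi_ne_zero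
  congr 1
  · push_cast; ring
  · apply intervalIntegral.integral_congr
    intro t ht
    simp only []
    rw [smul_eq_mul, fourier_coe_apply, jf]
    rw [← Complex.exp_add]
    congr 1
    push_cast
    have h2 : ((π:ℂ) + π) ≠ 0 := by
      intro h; exact hπ (by linear_combination h / 2)
    field_simp
    ring

lemma jf_cont1 (x : ℝ) : Continuous (jf1 x) := by
  unfold jf1 jf; fun_prop

lemma jf_cont2 (x : ℝ) : Continuous (jf2 x) := by
  unfold jf2 jf; fun_prop

lemma jf_endpoint (x : ℝ) : jf x π - jf x (-π) = 0 := by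
  simp [jf]

lemma jf1_endpoint (x : ℝ) : jf1 x π - jf1 x (-π) = 0 := by
  simp [jf1, jf, Real.cos_pi]

lemma coeff_step (x : ℝ) {n : ℤ} (hn : n ≠ 0) (f f' : ℝ → ℂ)
    (hd : ∀ t, HasDerivAt f (f' t) t)
    (hcont : Continuous f') (hend : f π - f (-π) = 0) :
    fourierCoeffOn hpi f n = 1 / (Complex.I * n) * fourierCoeffOn hpi f' n := by
  rw [fourierCoeffOn_of_hasDerivAt hpi hn (fun t _ => hd t)
    (hcont.intervalIntegrable _ _), hend]
  have hπ : (π:ℂ) ≠ 0 := Complex.ofReal_ne_zero.mpr Real.pi_ne_zero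
  have hn' : (n:ℂ) ≠ 0 := Int.cast_ne_zero.mpr hn
  have hI := Complex.I_ne_zero
  push_cast
  field_simp
  ring

lemma coeff2_bound (x : ℝ) (n : ℤ) :
    ‖fourierCoeffOn hpi (jf2 x) n‖ ≤ |x| + x ^ 2 := by
  rw [fourierCoeffOn_eq_integral]
  rw [norm_smul]
  have h1 : ‖(1:ℝ) / (π - -π)‖ = 1 / (2 * π) := by
    rw [show π - -π = 2 * π by ring, Real.norm_eq_abs, abs_of_pos (by positivity)]
  rw [h1]
  have h2 : ‖∫ t in (-π)..π, fourier (-n) (t : AddCircle (π - -π)) • jf2 x t‖ ≤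
      (|x| + x ^ 2) * |π - -π| := by
    apply intervalIntegral.norm_integral_le_of_norm_le_const
    intro t ht
    rw [norm_smul, fourier_norm_one, one_mul]
    exact jf2_norm_le x t
  calc 1 / (2 * π) * ‖_‖ ≤ 1 / (2 * π) * ((|x| + x ^ 2) * |π - -π|) := by
        apply mul_le_mul_of_nonneg_left h2 (by positivity)
    _ = |x| + x ^ 2 := by
        rw [abs_of_pos (show (0:ℝ) < π - -π by linarith [pi_pos])]
        have hπ := Real.pi_ne_zero
        field_simp
        ring

lemma coeff_bound (x : ℝ) {n : ℤ} (hn : n ≠ 0) :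
    ‖besselJ n x‖ ≤ (|x| + x ^ 2) * ((1 : ℝ) / (n:ℝ) ^ 2) := by
  rw [besselJ_eq,
    coeff_step x hn (jf x) (jf1 x) (jf_hasDeriv x) (jf_cont1 x) (jf_endpoint x),
    coeff_step x hn (jf1 x) (jf2 x) (jf1_hasDeriv x) (jf_cont2 x) (jf1_endpoint x)]
  rw [norm_mul, norm_mul]
  have h1 : ‖1 / (Complex.I * (n:ℂ))‖ = 1 / |(n:ℝ)| := by
    rw [norm_div, norm_mul, Complex.norm_I, one_mul, norm_one]
    norm_cast
    try rw [Complex.norm_intCast]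
  rw [h1]
  have hb := coeff2_bound x n
  have hnn : (0:ℝ) < |(n:ℝ)| := by
    simp [abs_pos]
    exact_mod_cast hn
  calc 1 / |(n:ℝ)| * (1 / |(n:ℝ)| * ‖fourierCoeffOn hpi (jf2 x) n‖)
      ≤ 1 / |(n:ℝ)| * (1 / |(n:ℝ)| * (|x| + x ^ 2)) := by
        gcongr
    _ = (|x| + x ^ 2) * ((1:ℝ) / (n:ℝ) ^ 2) := by
        rw [← _root_.sq_abs]
        field_simp
        rw [_root_.sq_abs]
        ring

lemma besselJ_summable (x : ℝ) : Summable (fun k : ℤ => ‖besselJ k x‖) := by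
  have hg : Summable (fun n : ℤ => (|x| + x ^ 2) * ((1:ℝ) / (n:ℝ) ^ 2)) :=
    (summable_one_div_int_pow.mpr one_lt_two).mul_left _
  apply Summable.of_norm_bounded_eventually hg
  have hsub : {n : ℤ | ¬ ‖‖besselJ n x‖‖ ≤ (|x| + x ^ 2) * (1 / (n:ℝ) ^ 2)} ⊆ {0} := by
    intro n hn
    by_contra h0
    exact hn (by rw [norm_norm]; exact coeff_bound x (by simpa using h0))
  exact Set.Finite.subset (Set.finite_singleton 0) hsub

lemma jF_apply (x θ : ℝ) :
    (jF x) ((θ : ℝ) : AddCircle (2 * π)) = Complex.exp (Complex.I * x * Real.sin θ) := by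
  have h := (jf_periodic x).lift_coe θ
  rw [show ((jF x) ((θ : ℝ) : AddCircle (2 * π))) = (jf_periodic x).lift θ from rfl, h, jf,
    mul_assoc]

lemma fourier_eq (k : ℤ) (θ : ℝ) :
    (fourier k ((θ : ℝ) : AddCircle (2 * π)) : ℂ) = Complex.exp (Complex.I * k * θ) := by
  rw [fourier_coe_apply]
  congr 1
  have hπ : (π:ℂ) ≠ 0 := Complex.ofReal_ne_zero.mpr Real.pi_ne_zero
  push_cast
  field_simp

/-- **The Jacobi–Anger expansion.**  For every `x ∈ ℝ`, the series
`∑_{k∈ℤ} J_k(x) e^{ikθ}` converges absolutely, uniformly in `θ ∈ ℝ`, and its sum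
equals `e^{i x sin θ}`. -/
theorem jacobi_anger (x : ℝ) :
    Summable (fun k : ℤ => ‖besselJ k x‖) ∧
    TendstoUniformly
      (fun (s : Finset ℤ) (θ : ℝ) => ∑ k ∈ s, besselJ k x * Complex.exp (Complex.I * k * θ))
      (fun θ : ℝ => Complex.exp (Complex.I * x * Real.sin θ)) atTop ∧
    (∀ θ : ℝ, HasSum (fun k : ℤ => besselJ k x * Complex.exp (Complex.I * k * θ))
      (Complex.exp (Complex.I * x * Real.sin θ))) := by
  have hcoeff : (fun k : ℤ => fourierCoeff (⇑(jF x)) k) = fun k => besselJ k x :=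
    funext fun k => jF_coeff x k
  have hsum : Summable (fourierCoeff (⇑(jF x))) := by
    rw [show fourierCoeff (⇑(jF x)) = fun k => besselJ k x from hcoeff]
    exact (besselJ_summable x).of_norm
  have HS := hasSum_fourier_series_of_summable hsum
  refine ⟨besselJ_summable x, ?_, ?_⟩
  · have HU := ContinuousMap.tendsto_iff_tendstoUniformly.mp HS
    have HU2 := HU.comp (fun θ : ℝ => ((θ : ℝ) : AddCircle (2 * π)))
    convert HU2 using 1
    · funext s θ
      simp only [Function.comp_apply, ContinuousMap.coe_sum, Finset.sum_apply,
        ContinuousMap.coe_smul, Pi.smul_apply, smul_eq_mul]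
      refine Finset.sum_congr rfl fun k _ => ?_
      rw [jF_coeff, _root_.fourier_eq]
    · funext θ
      exact (jF_apply x θ).symm
    · rfl
  · intro θ
    have HP := has_pointwise_sum_fourier_series_of_summable hsum ((θ : ℝ) : AddCircle (2 * π))
    rw [jF_apply] at HP
    convert HP using 1
    funext k
    rw [smul_eq_mul, jF_coeff, _root_.fourier_eq]

end
end

section
/- Let f : ℝ² → ℂ be continuous and compactly supported. For an integer k and r ≥ 0 define the angular Fourier coefficient f_k(r) = (1/(2π)) ∫_0^{2π} f(r cos θ, r sin θ) e^{−ikθ} dθ, and define the 2D Fourier transform f̂(Λ) = (1/(2π)) ∫_{ℝ²} f(x) e^{−i x·Λ} dx. Then for every λ > 0 and every integer k, (1/(2π)) ∫_0^{2π} f̂(λ cos φ, λ sin φ) e^{−ikφ} dφ = (−i)^{|k|} ∫_0^∞ f_k(r) J_{|k|}(λ r) r dr; that is, the k-th angular Fourier coefficient of f̂ on the circle of radius λ equals (−i)^{|k|} times the order-|k| Hankel transform of f_k. -/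
open MeasureTheory Real Set
open scoped RealInnerProductSpace

noncomputable section

/-- The point of `ℝ²` with coordinates `(a, b)`. -/
def mk2 (a b : ℝ) : EuclideanSpace ℝ (Fin 2) :=
  EuclideanSpace.single 0 a + EuclideanSpace.single 1 b

lemma mk2_apply (a b : ℝ) : mk2 a b = ((MeasurableEquiv.toLp 2 (Fin 2 → ℝ)).symm).symm ![a, b] := by
  apply ((MeasurableEquiv.toLp 2 (Fin 2 → ℝ)).symm).injective
  simp only [MeasurableEquiv.apply_symm_apply]
  funext i
  fin_cases i <;> simp [mk2, MeasurableEquiv.toLp_symm_apply, EuclideanSpace.single_apply]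

lemma mk2_inner (a b c d : ℝ) : ⟪mk2 a b, mk2 c d⟫ = a * c + b * d := by
  simp [mk2, inner_add_left, inner_add_right, EuclideanSpace.inner_single_left, EuclideanSpace.single_apply]

lemma mk2_norm (r θ : ℝ) (hr : 0 ≤ r) : ‖mk2 (r * Real.cos θ) (r * Real.sin θ)‖ = r := by
  have h := mk2_inner (r * Real.cos θ) (r * Real.sin θ) (r * Real.cos θ) (r * Real.sin θ)
  rw [real_inner_self_eq_norm_sq] at h
  have h2 : ‖mk2 (r * Real.cos θ) (r * Real.sin θ)‖ ^ 2 = r ^ 2 := by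
    rw [h]; nlinarith [sin_sq_add_cos_sq θ]
  nlinarith [norm_nonneg (mk2 (r * Real.cos θ) (r * Real.sin θ))]

lemma mk2_continuous : Continuous fun p : ℝ × ℝ => mk2 p.1 p.2 := by
  have h1 : Continuous fun a : ℝ => (EuclideanSpace.single 0 a : EuclideanSpace ℝ (Fin 2)) := by
    have : (fun a : ℝ => (EuclideanSpace.single 0 a : EuclideanSpace ℝ (Fin 2)))
        = fun a : ℝ => a • (EuclideanSpace.single 0 (1:ℝ)) := by
      funext a; apply PiLp.ext; intro i
      simp [EuclideanSpace.single_apply]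
    rw [this]; exact (continuous_id.smul continuous_const)
  have h2 : Continuous fun b : ℝ => (EuclideanSpace.single 1 b : EuclideanSpace ℝ (Fin 2)) := by
    have : (fun b : ℝ => (EuclideanSpace.single 1 b : EuclideanSpace ℝ (Fin 2)))
        = fun b : ℝ => b • (EuclideanSpace.single 1 (1:ℝ)) := by
      funext b; apply PiLp.ext; intro i
      simp [EuclideanSpace.single_apply]
    rw [this]; exact (continuous_id.smul continuous_const)
  exact (h1.comp continuous_fst).add (h2.comp continuous_snd)

/-- Transfer of integrals from `EuclideanSpace ℝ (Fin 2)` to `ℝ × ℝ`. -/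
lemma integral_mk2 (g : EuclideanSpace ℝ (Fin 2) → ℂ) :
    ∫ x, g x = ∫ p : ℝ × ℝ, g (mk2 p.1 p.2) := by
  have e1 := (EuclideanSpace.volume_preserving_symm_measurableEquiv_toLp (Fin 2)).symm
  have e2 := (volume_preserving_finTwoArrow ℝ).symm
  have key : ∫ x, g x
      = ∫ p : ℝ × ℝ, g (((MeasurableEquiv.toLp 2 (Fin 2 → ℝ)).symm).symm
          ((MeasurableEquiv.finTwoArrow (α := ℝ)).symm p)) := by
    rw [← (e1.comp e2).integral_comp
      (((MeasurableEquiv.toLp 2 (Fin 2 → ℝ)).symm).symm.measurableEmbedding.comp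
        (MeasurableEquiv.finTwoArrow (α := ℝ)).symm.measurableEmbedding)]
    rfl
  rw [key]
  congr 1; funext p
  rw [mk2_apply]
  congr 1

lemma two_pi_C_ne : (2 * (π:ℂ)) ≠ 0 := by
  simp [Real.pi_ne_zero, Complex.ofReal_ne_zero]

lemma besselJ_two_pi (k : ℤ) (x : ℝ) :
    ∫ τ in (-π)..π, Complex.exp (Complex.I * (x * Real.sin τ - k * τ))
      = 2 * π * besselJ k x := by
  rw [besselJ, ← mul_assoc, mul_one_div, div_self two_pi_C_ne, one_mul]

lemma besselJ_integrand_periodic (k : ℤ) (x : ℝ) :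
    Function.Periodic (fun τ : ℝ => Complex.exp (Complex.I * (x * Real.sin τ - k * τ)))
      (2 * π) := by
  intro τ
  simp only [Real.sin_add_two_pi, Complex.ofReal_add, Complex.ofReal_mul, Complex.ofReal_ofNat]
  rw [show Complex.I * (x * Real.sin τ - k * (τ + 2 * π))
      = Complex.I * (x * Real.sin τ - k * τ) + (-k : ℤ) * (2 * π * Complex.I) by push_cast; ring,
    Complex.exp_add, Complex.exp_int_mul_two_pi_mul_I, mul_one]

lemma w_periodic (k : ℤ) (z : ℝ) :
    Function.Periodic
      (fun τ : ℝ => Complex.exp (-Complex.I * z * Real.cos τ) * Complex.exp (-Complex.I * k * τ))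
      (2 * π) := by
  intro τ
  simp only [Real.cos_add_two_pi, Complex.ofReal_add, Complex.ofReal_mul, Complex.ofReal_ofNat]
  rw [show -Complex.I * k * (τ + 2 * π)
      = -Complex.I * k * τ + (-k : ℤ) * (2 * π * Complex.I) by push_cast; ring,
    Complex.exp_add, Complex.exp_int_mul_two_pi_mul_I, mul_one]

/-- The integral of a `2π`-periodic function over `[-π, π]` equals that over `[0, 2π]`. -/
lemma periodic_neg_pi_pi {g : ℝ → ℂ} (h : Function.Periodic g (2*π)) :
    ∫ τ in (-π)..π, g τ = ∫ τ in (0:ℝ)..(2*π), g τ := by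
  have := h.intervalIntegral_add_eq (-π) 0
  rw [show -π + 2*π = π by ring, zero_add] at this
  exact this

lemma besselJ_neg (m : ℕ) (x : ℝ) : besselJ (-(m:ℤ)) x = (-1)^m * besselJ m x := by
  have key : (2*(π:ℂ)) * besselJ (-(m:ℤ)) x = (2*(π:ℂ)) * ((-1)^m * besselJ m x) := by
    rw [← besselJ_two_pi]
    rw [periodic_neg_pi_pi (besselJ_integrand_periodic (-(m:ℤ)) x)]
    rw [show (0:ℝ) = π - π by ring]
    rw [show 2*π = π - -π by ring]
    rw [← intervalIntegral.integral_comp_sub_left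
      (fun τ : ℝ => Complex.exp (Complex.I * (x * Real.sin τ - ((-(m:ℤ) : ℤ) : ℂ) * τ))) π]
    have : ∀ σ ∈ uIcc (-π) π,
        (fun σ => Complex.exp (Complex.I *
            (x * Real.sin (π - σ) - ((-(m:ℤ) : ℤ) : ℂ) * (((π:ℝ) - σ : ℝ) : ℂ)))) σ
        = (fun σ => (-1:ℂ)^m *
            Complex.exp (Complex.I * (x * Real.sin σ - ((m:ℤ)) * σ))) σ := by
      intro σ _
      simp only [Real.sin_pi_sub]
      rw [show Complex.I * ((x:ℂ) * Real.sin σ - ((-(m:ℤ) : ℤ) : ℂ) * ((π:ℝ) - σ : ℝ))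
          = Complex.I * (x * Real.sin σ - ((m:ℤ):ℂ) * σ) + m * (π * Complex.I) by
            push_cast; ring,
        Complex.exp_add, Complex.exp_nat_mul, Complex.exp_pi_mul_I]
      ring
    rw [intervalIntegral.integral_congr this, intervalIntegral.integral_const_mul,
      besselJ_two_pi]
    ring
  exact mul_left_cancel₀ two_pi_C_ne key

lemma exp_neg_half_pi_I : Complex.exp (-(π/2:ℝ) * Complex.I) = -Complex.I := by
  rw [Complex.exp_mul_I]
  push_cast
  rw [Complex.cos_neg, Complex.sin_neg, Complex.cos_pi_div_two, Complex.sin_pi_div_two]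
  ring

lemma w_integral (k : ℤ) (z : ℝ) :
    ∫ τ in (-π)..π,
        Complex.exp (-Complex.I * z * Real.cos τ) * Complex.exp (-Complex.I * k * τ)
      = Complex.exp (-Complex.I * k * (π/2)) * (2 * π * besselJ k z) := by
  have h := intervalIntegral.integral_comp_add_right (a := -π - π/2) (b := π - π/2)
    (fun τ : ℝ => Complex.exp (-Complex.I * z * Real.cos τ) * Complex.exp (-Complex.I * k * τ))
    (π/2)
  rw [show -π - π/2 + π/2 = -π by ring, show π - π/2 + π/2 = π by ring] at h
  rw [← h]
  have h2 : ∀ σ ∈ uIcc (-π - π/2) (π - π/2),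
      (fun σ : ℝ => (fun τ : ℝ => Complex.exp (-Complex.I * z * Real.cos τ) *
          Complex.exp (-Complex.I * k * τ)) (σ + π/2)) σ
      = (fun σ : ℝ => Complex.exp (-Complex.I * k * (π/2)) *
          Complex.exp (Complex.I * (z * Real.sin σ - k * σ))) σ := by
    intro σ _
    simp only [Real.cos_add_pi_div_two]
    rw [← Complex.exp_add, ← Complex.exp_add]
    congr 1
    push_cast
    ring
  rw [intervalIntegral.integral_congr h2, intervalIntegral.integral_const_mul]
  congr 1
  have h3 := (besselJ_integrand_periodic k z).intervalIntegral_add_eq (-π - π/2) (-π)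
  rw [show -π - π/2 + 2*π = π - π/2 by ring, show -π + 2*π = π by ring] at h3
  rw [h3, besselJ_two_pi]

lemma w_integral_natAbs (k : ℤ) (z : ℝ) :
    ∫ τ in (-π)..π,
        Complex.exp (-Complex.I * z * Real.cos τ) * Complex.exp (-Complex.I * k * τ)
      = 2 * π * ((-Complex.I) ^ (k.natAbs) * besselJ (k.natAbs : ℤ) z) := by
  rw [w_integral]
  have he : Complex.exp (-Complex.I * k * (π/2)) = (-Complex.I) ^ (k : ℤ) := by
    rw [show -Complex.I * k * (π/2) = (k:ℂ) * (-(π/2:ℝ) * Complex.I) by push_cast; ring,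
      Complex.exp_int_mul, exp_neg_half_pi_I]
  rw [he]
  obtain ⟨n, rfl | rfl⟩ := Int.eq_nat_or_neg k
  · simp only [Int.natAbs_natCast, zpow_natCast]
    ring
  · simp only [Int.natAbs_neg, Int.natAbs_natCast]
    rw [besselJ_neg, zpow_neg, zpow_natCast, ← inv_pow,
      show (-Complex.I)⁻¹ = Complex.I by simp [inv_neg, Complex.inv_I], neg_pow Complex.I]
    ring

/-- The key angular integral: Fourier coefficient of a plane wave on a circle. -/
lemma phi_integral (k : ℤ) (z θ : ℝ) :
    ∫ φ in (0:ℝ)..(2*π),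
        Complex.exp (-Complex.I * z * Real.cos (φ - θ)) * Complex.exp (-Complex.I * k * φ)
      = Complex.exp (-Complex.I * k * θ) *
          (2 * π * ((-Complex.I) ^ (k.natAbs) * besselJ (k.natAbs : ℤ) z)) := by
  have h1 : ∀ φ ∈ uIcc (0:ℝ) (2*π),
      (fun φ : ℝ => Complex.exp (-Complex.I * z * Real.cos (φ - θ)) *
          Complex.exp (-Complex.I * k * φ)) φ
      = (fun φ : ℝ => ((fun τ : ℝ => Complex.exp (-Complex.I * z * Real.cos τ) *
          Complex.exp (-Complex.I * k * τ)) (φ - θ)) * Complex.exp (-Complex.I * k * θ)) φ := by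
    intro φ _
    simp only
    rw [← Complex.exp_add, mul_assoc, ← Complex.exp_add, ← Complex.exp_add]
    congr 1
    push_cast
    ring
  rw [intervalIntegral.integral_congr h1, intervalIntegral.integral_mul_const,
    intervalIntegral.integral_comp_sub_right
      (fun τ : ℝ => Complex.exp (-Complex.I * z * Real.cos τ) *
        Complex.exp (-Complex.I * k * τ)) θ]
  have h3 := (w_periodic k z).intervalIntegral_add_eq (0 - θ) (-π)
  rw [show (0:ℝ) - θ + 2*π = 2*π - θ by ring, show -π + 2*π = π by ring] at h3
  rw [h3, w_integral_natAbs]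
  ring

lemma norm_exp_I1 (x y : ℝ) : ‖Complex.exp (-Complex.I * (x:ℂ) * (y:ℂ))‖ = 1 := by
  rw [show -Complex.I * (x:ℂ) * (y:ℂ) = ((-(x*y) : ℝ):ℂ) * Complex.I by push_cast; ring]
  exact Complex.norm_exp_ofReal_mul_I _

lemma norm_exp_I2 (k : ℤ) (y : ℝ) : ‖Complex.exp (-Complex.I * (k:ℂ) * (y:ℂ))‖ = 1 := by
  rw [show -Complex.I * (k:ℂ) * (y:ℂ) = ((-((k:ℝ)*y) : ℝ):ℂ) * Complex.I by push_cast; ring]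
  exact Complex.norm_exp_ofReal_mul_I _

lemma fk_integrand_periodic (f : EuclideanSpace ℝ (Fin 2) → ℂ) (k : ℤ) (r : ℝ) :
    Function.Periodic
      (fun θ : ℝ => f (mk2 (r * Real.cos θ) (r * Real.sin θ)) * Complex.exp (-Complex.I * k * θ))
      (2 * π) := by
  intro θ
  simp only [Real.cos_add_two_pi, Real.sin_add_two_pi, Complex.ofReal_add, Complex.ofReal_mul,
    Complex.ofReal_ofNat]
  rw [show -Complex.I * k * (θ + 2 * π)
      = -Complex.I * k * θ + (-k : ℤ) * (2 * π * Complex.I) by push_cast; ring,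
    Complex.exp_add, Complex.exp_int_mul_two_pi_mul_I, mul_one]

/-- **Angular Fourier coefficients of the 2D Fourier transform.**  For continuous,
compactly supported `f : ℝ² → ℂ`, with angular Fourier coefficients
`f_k(r) = (1/(2π)) ∫_0^{2π} f(r cos θ, r sin θ) e^{−ikθ} dθ` and 2D Fourier transform
`f̂(Λ) = (1/(2π)) ∫_{ℝ²} f(x) e^{−i x·Λ} dx`, one has, for every `λ > 0` and `k ∈ ℤ`,
`(1/(2π)) ∫_0^{2π} f̂(λ cos φ, λ sin φ) e^{−ikφ} dφ = (−i)^{|k|} ∫_0^∞ f_k(r) J_{|k|}(λr) r dr`. -/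
theorem fourier_coeff_hankel
    (f : EuclideanSpace ℝ (Fin 2) → ℂ)
    (hf_cont : Continuous f) (hf_supp : HasCompactSupport f)
    (fk : ℤ → ℝ → ℂ)
    (hfk : ∀ (k : ℤ) (r : ℝ), 0 ≤ r →
      fk k r = (1 / (2 * (π : ℂ))) *
        ∫ θ in (0 : ℝ)..(2 * π),
          f (mk2 (r * Real.cos θ) (r * Real.sin θ)) * Complex.exp (-Complex.I * k * θ))
    (fhat : EuclideanSpace ℝ (Fin 2) → ℂ)
    (hfhat : ∀ Λ : EuclideanSpace ℝ (Fin 2),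
      fhat Λ = (1 / (2 * (π : ℂ))) *
        ∫ x : EuclideanSpace ℝ (Fin 2), f x * Complex.exp (-Complex.I * (⟪x, Λ⟫ : ℝ))) :
    ∀ (lam : ℝ), 0 < lam → ∀ (k : ℤ),
      (1 / (2 * (π : ℂ))) *
          ∫ φ in (0 : ℝ)..(2 * π),
            fhat (mk2 (lam * Real.cos φ) (lam * Real.sin φ)) *
              Complex.exp (-Complex.I * k * φ) =
        (-Complex.I) ^ (k.natAbs) *
          ∫ r in Ioi (0 : ℝ), fk k r * besselJ (k.natAbs : ℤ) (lam * r) * (r : ℂ) := by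
  intro lam hlam k
  have h2π : (0:ℝ) < 2 * π := by positivity
  have mT : MeasurableSet (Ioi (0:ℝ) ×ˢ Ioo (-π) π) :=
    measurableSet_Ioi.prod measurableSet_Ioo
  -- Step 1: polar-coordinates formula for `fhat` on the circle of radius `lam`
  have hfhat' : ∀ φ : ℝ, fhat (mk2 (lam * Real.cos φ) (lam * Real.sin φ))
      = (1 / (2 * (π:ℂ))) * ∫ p in (Ioi (0:ℝ) ×ˢ Ioo (-π) π),
          (p.1 : ℂ) * (f (mk2 (p.1 * Real.cos p.2) (p.1 * Real.sin p.2)) *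
            Complex.exp (-Complex.I * ((lam * p.1 : ℝ) : ℂ) *
              ((Real.cos (φ - p.2) : ℝ) : ℂ))) := by
    intro φ
    rw [hfhat, integral_mk2]
    congr 1
    rw [← integral_comp_polarCoord_symm
      (fun p : ℝ × ℝ => f (mk2 p.1 p.2) * Complex.exp (-Complex.I *
        ((⟪mk2 p.1 p.2, mk2 (lam * Real.cos φ) (lam * Real.sin φ)⟫ : ℝ) : ℂ)))]
    rw [polarCoord_target]
    apply setIntegral_congr_fun mT
    intro p hp
    simp only [polarCoord_symm_apply]
    rw [Complex.real_smul]
    congr 2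
    rw [mk2_inner]
    congr 1
    push_cast
    rw [Complex.cos_sub]
    ring
  -- Step 2: express the LHS as a double integral
  have step2 : (1 / (2 * (π : ℂ))) *
        ∫ φ in (0 : ℝ)..(2 * π),
          fhat (mk2 (lam * Real.cos φ) (lam * Real.sin φ)) * Complex.exp (-Complex.I * k * φ)
      = (1 / (2 * (π:ℂ))) * (1 / (2 * (π:ℂ))) *
          ∫ φ in Ioc (0:ℝ) (2*π), ∫ p in (Ioi (0:ℝ) ×ˢ Ioo (-π) π),
            (p.1 : ℂ) * (f (mk2 (p.1 * Real.cos p.2) (p.1 * Real.sin p.2)) *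
              Complex.exp (-Complex.I * ((lam * p.1 : ℝ) : ℂ) *
                ((Real.cos (φ - p.2) : ℝ) : ℂ))) * Complex.exp (-Complex.I * k * φ) := by
    rw [intervalIntegral.integral_congr
      (g := fun φ : ℝ => ((1 / (2 * (π:ℂ))) * ∫ p in (Ioi (0:ℝ) ×ˢ Ioo (-π) π),
          (p.1 : ℂ) * (f (mk2 (p.1 * Real.cos p.2) (p.1 * Real.sin p.2)) *
            Complex.exp (-Complex.I * ((lam * p.1 : ℝ) : ℂ) *
              ((Real.cos (φ - p.2) : ℝ) : ℂ)))) * Complex.exp (-Complex.I * k * φ))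
      (fun φ _ => by rw [hfhat'])]
    rw [intervalIntegral.integral_of_le h2π.le]
    have hcong : EqOn
        (fun φ : ℝ => ((1 / (2 * (π:ℂ))) * ∫ p in (Ioi (0:ℝ) ×ˢ Ioo (-π) π),
            (p.1 : ℂ) * (f (mk2 (p.1 * Real.cos p.2) (p.1 * Real.sin p.2)) *
              Complex.exp (-Complex.I * ((lam * p.1 : ℝ) : ℂ) *
                ((Real.cos (φ - p.2) : ℝ) : ℂ)))) * Complex.exp (-Complex.I * k * φ))
        (fun φ : ℝ => (1 / (2 * (π:ℂ))) * ∫ p in (Ioi (0:ℝ) ×ˢ Ioo (-π) π),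
            (p.1 : ℂ) * (f (mk2 (p.1 * Real.cos p.2) (p.1 * Real.sin p.2)) *
              Complex.exp (-Complex.I * ((lam * p.1 : ℝ) : ℂ) *
                ((Real.cos (φ - p.2) : ℝ) : ℂ))) * Complex.exp (-Complex.I * k * φ))
        (Ioc (0:ℝ) (2*π)) := by
      intro φ _
      simp only
      rw [mul_assoc, ← MeasureTheory.integral_mul_const]
    rw [setIntegral_congr_fun measurableSet_Ioc hcong]
    rw [MeasureTheory.integral_const_mul, ← mul_assoc]
  -- Step 3: integrability of the double integrand
  have hint : Integrable
      (Function.uncurry (fun (φ : ℝ) (p : ℝ × ℝ) =>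
        (p.1 : ℂ) * (f (mk2 (p.1 * Real.cos p.2) (p.1 * Real.sin p.2)) *
          Complex.exp (-Complex.I * ((lam * p.1 : ℝ) : ℂ) *
            ((Real.cos (φ - p.2) : ℝ) : ℂ))) * Complex.exp (-Complex.I * k * φ)))
      ((volume.restrict (Ioc (0:ℝ) (2*π))).prod
        (volume.restrict (Ioi (0:ℝ) ×ˢ Ioo (-π) π))) := by
    obtain ⟨M, hM⟩ := hf_supp.exists_bound_of_continuous hf_cont
    have hM0 : 0 ≤ M := le_trans (norm_nonneg (f 0)) (hM 0)
    obtain ⟨R0, hR0⟩ := hf_supp.isBounded.subset_closedBall 0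
    have hR : tsupport f ⊆ Metric.closedBall 0 (max R0 0) :=
      subset_trans hR0 (Metric.closedBall_subset_closedBall (le_max_left _ _))
    set R : ℝ := max R0 0 with hRdef
    have hRnn : 0 ≤ R := le_max_right _ _
    have hf0 : ∀ r θ : ℝ, R < r → f (mk2 (r * Real.cos θ) (r * Real.sin θ)) = 0 := by
      intro r θ hr
      apply image_eq_zero_of_notMem_tsupport
      intro hmem
      have h1 := hR hmem
      rw [Metric.mem_closedBall, dist_zero_right] at h1
      rw [mk2_norm r θ (le_trans hRnn hr.le)] at h1
      linarith
    have hS : MeasurableSet (Ioc (0:ℝ) R ×ˢ (univ : Set ℝ)) :=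
      measurableSet_Ioc.prod MeasurableSet.univ
    apply MeasureTheory.Integrable.mono'
      (g := fun q : ℝ × (ℝ × ℝ) =>
        ((univ : Set ℝ) ×ˢ (Ioc (0:ℝ) R ×ˢ (univ : Set ℝ))).indicator (fun _ => M * R) q)
    · rw [integrable_indicator_iff (MeasurableSet.univ.prod hS)]
      refine integrableOn_const (hs := LT.lt.ne ?_) (hC := enorm_ne_top)
      rw [Measure.prod_prod]
      apply ENNReal.mul_lt_top
      · rw [Measure.restrict_apply_univ, Real.volume_Ioc]
        exact ENNReal.ofReal_lt_top
      · rw [Measure.restrict_apply hS]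
        have hsub : (Ioc (0:ℝ) R ×ˢ (univ : Set ℝ)) ∩ (Ioi (0:ℝ) ×ˢ Ioo (-π) π)
            ⊆ Ioc (0:ℝ) R ×ˢ Ioo (-π) π := by
          rintro ⟨a, b⟩ ⟨⟨h1, _⟩, ⟨_, h4⟩⟩
          exact ⟨h1, h4⟩
        apply lt_of_le_of_lt (measure_mono hsub)
        rw [Measure.volume_eq_prod ℝ ℝ, Measure.prod_prod, Real.volume_Ioc, Real.volume_Ioo]
        exact ENNReal.mul_lt_top ENNReal.ofReal_lt_top ENNReal.ofReal_lt_top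
    · apply Continuous.aestronglyMeasurable
      have hmap : Continuous fun q : ℝ × (ℝ × ℝ) =>
          ((q.2.1 * Real.cos q.2.2, q.2.1 * Real.sin q.2.2) : ℝ × ℝ) := by fun_prop
      have hf2 : Continuous fun q : ℝ × (ℝ × ℝ) =>
          f (mk2 (q.2.1 * Real.cos q.2.2) (q.2.1 * Real.sin q.2.2)) :=
        (hf_cont.comp mk2_continuous).comp hmap
      have hc1 : Continuous fun q : ℝ × (ℝ × ℝ) => ((q.2.1 : ℝ) : ℂ) := by fun_prop
      have hexp1 : Continuous fun q : ℝ × (ℝ × ℝ) =>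
          Complex.exp (-Complex.I * ((lam * q.2.1 : ℝ) : ℂ) *
            ((Real.cos (q.1 - q.2.2) : ℝ) : ℂ)) := by fun_prop
      have hexp2 : Continuous fun q : ℝ × (ℝ × ℝ) =>
          Complex.exp (-Complex.I * (k : ℂ) * ((q.1 : ℝ) : ℂ)) := by fun_prop
      exact (hc1.mul (hf2.mul hexp1)).mul hexp2
    · rw [Measure.prod_restrict]
      filter_upwards [ae_restrict_mem (measurableSet_Ioc.prod mT)] with q hq
      obtain ⟨-, hq2⟩ := hq
      obtain ⟨h21, -⟩ := hq2
      have h21' : 0 < q.2.1 := mem_Ioi.mp h21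
      have hne1 : ‖Complex.exp (-Complex.I * ((lam * q.2.1 : ℝ) : ℂ) *
          ((Real.cos (q.1 - q.2.2) : ℝ) : ℂ))‖ = 1 :=
        norm_exp_I1 (lam * q.2.1) (Real.cos (q.1 - q.2.2))
      have hne2 : ‖Complex.exp (-Complex.I * (k : ℂ) * ((q.1 : ℝ) : ℂ))‖ = 1 :=
        norm_exp_I2 k q.1
      show ‖((q.2.1 : ℝ) : ℂ) * (f (mk2 (q.2.1 * Real.cos q.2.2) (q.2.1 * Real.sin q.2.2)) *
          Complex.exp (-Complex.I * ((lam * q.2.1 : ℝ) : ℂ) *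
            ((Real.cos (q.1 - q.2.2) : ℝ) : ℂ))) *
          Complex.exp (-Complex.I * (k : ℂ) * ((q.1 : ℝ) : ℂ))‖ ≤ _
      rw [norm_mul, norm_mul, norm_mul, hne1, hne2, Complex.norm_real, Real.norm_eq_abs]
      by_cases hcase : q.2.1 ≤ R
      · rw [indicator_of_mem (by exact ⟨trivial, ⟨h21', hcase⟩, trivial⟩)]
        have hFn := hM (mk2 (q.2.1 * Real.cos q.2.2) (q.2.1 * Real.sin q.2.2))
        rw [abs_of_pos h21']
        nlinarith [norm_nonneg (f (mk2 (q.2.1 * Real.cos q.2.2) (q.2.1 * Real.sin q.2.2)))]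
      · rw [hf0 _ _ (lt_of_not_ge hcase)]
        simp only [norm_zero, zero_mul, mul_zero, mul_one]
        exact indicator_nonneg (fun _ _ => mul_nonneg hM0 hRnn) _
  -- Step 4: swap the order of integration
  have hswap := MeasureTheory.integral_integral_swap hint
  -- Step 5: the inner angular integral
  have hinner : ∀ p : ℝ × ℝ, p ∈ (Ioi (0:ℝ) ×ˢ Ioo (-π) π) →
      (∫ φ in Ioc (0:ℝ) (2*π),
        (p.1 : ℂ) * (f (mk2 (p.1 * Real.cos p.2) (p.1 * Real.sin p.2)) *
          Complex.exp (-Complex.I * ((lam * p.1 : ℝ) : ℂ) *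
            ((Real.cos (φ - p.2) : ℝ) : ℂ))) * Complex.exp (-Complex.I * k * φ))
      = ((p.1 : ℂ) * (2 * (π:ℂ) * ((-Complex.I) ^ (k.natAbs) *
            besselJ (k.natAbs : ℤ) (lam * p.1)))) *
          (f (mk2 (p.1 * Real.cos p.2) (p.1 * Real.sin p.2)) *
            Complex.exp (-Complex.I * k * p.2)) := by
    intro p _
    rw [← intervalIntegral.integral_of_le h2π.le]
    rw [intervalIntegral.integral_congr
      (g := fun φ : ℝ => ((p.1 : ℂ) * f (mk2 (p.1 * Real.cos p.2) (p.1 * Real.sin p.2))) *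
        (Complex.exp (-Complex.I * ((lam * p.1 : ℝ) : ℂ) * ((Real.cos (φ - p.2) : ℝ) : ℂ)) *
          Complex.exp (-Complex.I * k * φ)))
      (fun φ _ => by ring)]
    rw [intervalIntegral.integral_const_mul, phi_integral]
    ring
  rw [step2, hswap]
  rw [setIntegral_congr_fun mT (fun p hp => hinner p hp)]
  have hΦ : IntegrableOn
      (fun p : ℝ × ℝ => ((p.1 : ℂ) * (2 * (π:ℂ) * ((-Complex.I) ^ (k.natAbs) *
            besselJ (k.natAbs : ℤ) (lam * p.1)))) *
          (f (mk2 (p.1 * Real.cos p.2) (p.1 * Real.sin p.2)) *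
            Complex.exp (-Complex.I * k * p.2)))
      (Ioi (0:ℝ) ×ˢ Ioo (-π) π) volume :=
    (hint.integral_prod_right).congr ((ae_restrict_mem mT).mono (fun p hp => hinner p hp))
  rw [Measure.volume_eq_prod ℝ ℝ] at hΦ
  rw [Measure.volume_eq_prod ℝ ℝ]
  rw [setIntegral_prod _ hΦ]
  have hθ : EqOn
      (fun r : ℝ => ∫ θ in Ioo (-π) π,
        (fun p : ℝ × ℝ => ((p.1 : ℂ) * (2 * (π:ℂ) * ((-Complex.I) ^ (k.natAbs) *
            besselJ (k.natAbs : ℤ) (lam * p.1)))) *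
          (f (mk2 (p.1 * Real.cos p.2) (p.1 * Real.sin p.2)) *
            Complex.exp (-Complex.I * k * p.2))) (r, θ))
      (fun r : ℝ => ((r : ℂ) * (2 * (π:ℂ) * ((-Complex.I) ^ (k.natAbs) *
            besselJ (k.natAbs : ℤ) (lam * r)))) * (2 * (π:ℂ) * fk k r))
      (Ioi (0:ℝ)) := by
    intro r hr
    simp only
    rw [MeasureTheory.integral_const_mul]
    rw [← MeasureTheory.integral_Ioc_eq_integral_Ioo,
      ← intervalIntegral.integral_of_le (by linarith [Real.pi_pos] : (-π:ℝ) ≤ π)]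
    rw [periodic_neg_pi_pi (fk_integrand_periodic f k r)]
    rw [hfk k r (le_of_lt (mem_Ioi.mp hr))]
    have h2 : (2*(π:ℂ)) * (1 / (2*(π:ℂ))) = 1 := by
      rw [mul_one_div, div_self two_pi_C_ne]
    rw [← mul_assoc (2*(π:ℂ)) (1 / (2*(π:ℂ))), h2, one_mul]
  rw [setIntegral_congr_fun measurableSet_Ioi hθ]
  have hfin : EqOn
      (fun r : ℝ => ((r : ℂ) * (2 * (π:ℂ) * ((-Complex.I) ^ (k.natAbs) *
            besselJ (k.natAbs : ℤ) (lam * r)))) * (2 * (π:ℂ) * fk k r))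
      (fun r : ℝ => ((2 * (π:ℂ)) * (2 * (π:ℂ)) * (-Complex.I) ^ (k.natAbs)) *
        (fk k r * besselJ (k.natAbs : ℤ) (lam * r) * (r : ℂ)))
      (Ioi (0:ℝ)) := fun r _ => by simp only; ring
  rw [setIntegral_congr_fun measurableSet_Ioi hfin]
  rw [MeasureTheory.integral_const_mul, ← mul_assoc]
  congr 1
  have h2 : (1 / (2*(π:ℂ))) * (1 / (2*(π:ℂ))) * ((2*(π:ℂ)) * (2*(π:ℂ))) = 1 := by
    field_simp
  calc (1 / (2*(π:ℂ))) * (1 / (2*(π:ℂ))) * ((2*(π:ℂ)) * (2*(π:ℂ)) * (-Complex.I)^(k.natAbs))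
      = ((1 / (2*(π:ℂ))) * (1 / (2*(π:ℂ))) * ((2*(π:ℂ)) * (2*(π:ℂ)))) *
          (-Complex.I)^(k.natAbs) := by ring
    _ = (-Complex.I)^(k.natAbs) := by rw [h2, one_mul]

end
end
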